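/- arXiv:0705.0930 — 2 statements merged into one kernel-verified Lean document; each statement's English description precedes it below -/
import Mathlib

section
/- Let M be a module over a commutative ring R and f : M → M an R-linear endomorphism. The evaluation map ev : PolynomialModule R M → M defined by ev(Σ mₙ tⁿ) = Σ fⁿ(mₙ) is surjective, and its kernel equals the image of the map (t − f) : PolynomialModule R M → PolynomialModule R M sending Σ mₙ tⁿ to Σ mₙ tⁿ⁺¹ − Σ f(mₙ) tⁿ. -/
open Polynomial PolynomialModule

/-- The map `t - f` on `PolynomialModule R M`, sending `Σ mₙ tⁿ` to
`Σ mₙ tⁿ⁺¹ − Σ f(mₙ) tⁿ`. -/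
noncomputable def tSubF {R M : Type*} [CommRing R] [AddCommGroup M] [Module R M]
    (f : M →ₗ[R] M) : PolynomialModule R M →ₗ[R] PolynomialModule R M where
  toFun p := (X : R[X]) • p - PolynomialModule.map R f p
  map_add' p q := by simp [smul_add]; abel
  map_smul' r p := by simp [smul_comm r, smul_sub]

/-- The evaluation map `Σ mₙ tⁿ ↦ Σ fⁿ(mₙ)`. -/
noncomputable def evalF {R M : Type*} [CommRing R] [AddCommGroup M] [Module R M]
    (f : M →ₗ[R] M) (p : PolynomialModule R M) : M :=
  Finsupp.sum (show ℕ →₀ M from p.coeff) fun n m => (f ^ n) m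

lemma evalF_single {R M : Type*} [CommRing R] [AddCommGroup M] [Module R M]
    (f : M →ₗ[R] M) (n : ℕ) (m : M) : evalF f (single R n m) = (f ^ n) m := by
  exact Finsupp.sum_single_index (map_zero (f ^ n))

lemma evalF_add {R M : Type*} [CommRing R] [AddCommGroup M] [Module R M]
    (f : M →ₗ[R] M) (p q : PolynomialModule R M) :
    evalF f (p + q) = evalF f p + evalF f q := by
  classical
  exact Finsupp.sum_add_index (f := p.coeff) (g := q.coeff) (by simp) (by intros; simp)

lemma tSubF_single {R M : Type*} [CommRing R] [AddCommGroup M] [Module R M]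
    (f : M →ₗ[R] M) (n : ℕ) (m : M) :
    tSubF f (single R n m) = single R (n + 1) m - single R n (f m) := by
  show (X : R[X]) • single R n m - PolynomialModule.map R f (single R n m) = _
  rw [map_single, ← Polynomial.monomial_one_one_eq_X, monomial_smul_single, one_smul,
    add_comm]

lemma key {R M : Type*} [CommRing R] [AddCommGroup M] [Module R M]
    (f : M →ₗ[R] M) (p : PolynomialModule R M) :
    p - single R 0 (evalF f p) ∈ LinearMap.range (tSubF f) := by
  induction p using PolynomialModule.induction_linear with
  | zero => simp [evalF]
  | add p q hp hq =>
      have : p + q - single R 0 (evalF f (p + q)) =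
          (p - single R 0 (evalF f p)) + (q - single R 0 (evalF f q)) := by
        rw [evalF_add]; simp only [single_add]; abel
      rw [this]; exact add_mem hp hq
  | single n m =>
      rw [evalF_single]
      induction n generalizing m with
      | zero => simp
      | succ k ih =>
          have h2 := ih (f m)
          have h1 : single R (k+1) m - single R k (f m) ∈ LinearMap.range (tSubF f) :=
            ⟨single R k m, tSubF_single f k m⟩
          have : single R (k+1) m - single R 0 ((f ^ (k+1)) m) =
              (single R (k+1) m - single R k (f m)) +
              (single R k (f m) - single R 0 ((f ^ k) (f m))) := by
            have : (f ^ (k+1)) m = (f ^ k) (f m) := by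
              rw [← Module.End.mul_apply, ← pow_succ]
            rw [this]; abel
          rw [this]; exact add_mem h1 h2

theorem evalF_surjective_and_ker_eq_range_tSubF
    {R M : Type*} [CommRing R] [AddCommGroup M] [Module R M] (f : M →ₗ[R] M) :
    Function.Surjective (evalF f) ∧
      {p : PolynomialModule R M | evalF f p = 0} = Set.range (tSubF f) := by
  constructor
  · intro m
    exact ⟨single R 0 m, by simpa using evalF_single f 0 m⟩
  · ext p
    simp only [Set.mem_setOf_eq, Set.mem_range]
    constructor
    · intro hp
      obtain ⟨q, hq⟩ := key f p
      exact ⟨q, by rw [hq, hp]; simp⟩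
    · rintro ⟨q, rfl⟩
      induction q using PolynomialModule.induction_linear with
      | zero => simp [evalF]
      | add p q hp hq => rw [map_add, evalF_add, hp, hq, add_zero]
      | single n m =>
          rw [tSubF_single, sub_eq_add_neg]
          have : -(single R n (f m)) = single R n (-(f m)) := by exact (map_neg (lsingle R n) (f m)).symm
          rw [this, evalF_add, evalF_single, evalF_single, map_neg,
            ← Module.End.mul_apply, ← pow_succ]
          simp
end

section
/- Let M be an R-module and f : M → M an R-linear endomorphism. The map (t − f) : PolynomialModule R M → PolynomialModule R M, sending Σ mₙ tⁿ to Σ mₙ tⁿ⁺¹ − Σ f(mₙ) tⁿ, is injective. -/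
open Polynomial PolynomialModule

theorem tSubF_injective {R M : Type*} [CommRing R] [AddCommGroup M] [Module R M]
    (f : M →ₗ[R] M) : Function.Injective (tSubF f) := by
  rw [injective_iff_map_eq_zero]
  intro p hp
  by_contra hne
  have hsupp : p.coeff.support.Nonempty := Finsupp.support_nonempty_iff.mpr (mt coeff_eq_zero.mp hne)
  set N := p.coeff.support.max' hsupp with hN
  have hmem : N ∈ p.coeff.support := p.coeff.support.max'_mem hsupp
  have hout : p.coeff (N + 1) = 0 := by
    by_contra h
    have := p.coeff.support.le_max' (N + 1) (Finsupp.mem_support_iff.mpr h)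
    omega
  have h1 : (tSubF f p).coeff (N + 1) = p.coeff N - f (p.coeff (N + 1)) := by
    simp only [tSubF, LinearMap.coe_mk, AddHom.coe_mk]
    rw [show ∀ x y : PolynomialModule R M, (x - y).coeff = x.coeff - y.coeff from fun _ _ => rfl,
      Finsupp.sub_apply]
    congr 1
    · rw [show (X : R[X]) = Polynomial.monomial 1 1 by simp [Polynomial.X],
        PolynomialModule.monomial_smul_apply]
      simp
  rw [hp] at h1
  rw [hout, map_zero, sub_zero] at h1
  exact Finsupp.mem_support_iff.mp hmem h1.symm
end
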